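/- LID under a smooth monotone reparametrization of distances: if g : [0, ∞) → [0, ∞) is continuously differentiable with g(0) = 0, g'(0) = a > 0, and F has ID*_F = d with F continuous and F(r) → 0 as r → 0⁺, then G(r) = F(g(r)) satisfies ID*_G = d. -/

import Mathlib

open Set Filter

theorem lid_reparametrization (F g : ℝ → ℝ) (R d a : ℝ) (hR : 0 < R) (ha : 0 < a)
    (hF : ContDiffOn ℝ 1 F (Ioo 0 R)) (hFpos : ∀ r ∈ Ioo (0:ℝ) R, 0 < F r)
    (hF0 : Tendsto F (nhdsWithin 0 (Ioi 0)) (nhds 0))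
    (hlid : Tendsto (fun r => r * deriv F r / F r) (nhdsWithin 0 (Ioi 0)) (nhds d))
    (hg : ContDiff ℝ 1 g) (hg0 : g 0 = 0) (hg' : deriv g 0 = a) :
    Tendsto (fun r => r * deriv (fun x => F (g x)) r / F (g r))
      (nhdsWithin 0 (Ioi 0)) (nhds d) := by
  have hgd0 : HasDerivAt g a 0 := by
    have := (hg.differentiable one_ne_zero 0).hasDerivAt
    rwa [hg'] at this
  have hslope : Tendsto (fun r => g r / r) (nhdsWithin 0 (Ioi 0)) (nhds a) := by
    have h1 := hasDerivAt_iff_tendsto_slope.mp hgd0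
    have h2 : Tendsto (slope g 0) (nhdsWithin 0 (Ioi 0)) (nhds a) :=
      h1.mono_left (nhdsWithin_mono _ (fun x hx => ne_of_gt hx))
    refine h2.congr' ?_
    filter_upwards [self_mem_nhdsWithin] with r hr
    simp [slope_def_field, hg0]
  have hgpos : ∀ᶠ r in nhdsWithin 0 (Ioi 0), 0 < g r := by
    filter_upwards [hslope.eventually (eventually_gt_nhds ha), self_mem_nhdsWithin]
      with r h1 h2
    rcases div_pos_iff.mp h1 with ⟨h, _⟩ | ⟨_, h⟩
    · exact h
    · exact absurd h2 (not_lt.mpr h.le)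
  have hconv : Tendsto g (nhdsWithin 0 (Ioi 0)) (nhds 0) := by
    have := (hg.continuous.tendsto 0).mono_left (nhdsWithin_le_nhds (s := Ioi (0:ℝ)))
    rwa [hg0] at this
  have T1 : Tendsto g (nhdsWithin 0 (Ioi 0)) (nhdsWithin 0 (Ioi 0)) :=
    tendsto_nhdsWithin_iff.mpr ⟨hconv, hgpos⟩
  have hmem : ∀ᶠ r in nhdsWithin 0 (Ioi 0), g r ∈ Ioo 0 R :=
    T1 (Ioo_mem_nhdsGT_of_mem ⟨le_rfl, hR⟩)
  have heq : ∀ᶠ r in nhdsWithin 0 (Ioi 0),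
      r * deriv (fun x => F (g x)) r / F (g r)
        = (g r * deriv F (g r) / F (g r)) * (deriv g r * (r / g r)) := by
    filter_upwards [hmem, hgpos] with r hm hp
    have hFd : HasDerivAt F (deriv F (g r)) (g r) :=
      ((hF.contDiffAt (Ioo_mem_nhds hm.1 hm.2)).differentiableAt one_ne_zero).hasDerivAt
    have hgd : HasDerivAt g (deriv g r) r := (hg.differentiable one_ne_zero r).hasDerivAt
    have hcomp : deriv (fun x => F (g x)) r = deriv F (g r) * deriv g r :=
      (hFd.comp r hgd).deriv
    rw [hcomp]
    have hFne : F (g r) ≠ 0 := (hFpos _ hm).ne'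
    field_simp
  have hA : Tendsto (fun r => g r * deriv F (g r) / F (g r)) (nhdsWithin 0 (Ioi 0))
      (nhds d) := hlid.comp T1
  have hderiv : Tendsto (fun r => deriv g r) (nhdsWithin 0 (Ioi 0)) (nhds a) := by
    have h1 : Continuous (deriv g) := hg.continuous_deriv le_rfl
    have h2 := h1.tendsto 0
    rw [hg'] at h2
    exact h2.mono_left nhdsWithin_le_nhds
  have hinv : Tendsto (fun r => r / g r) (nhdsWithin 0 (Ioi 0)) (nhds a⁻¹) := by
    simpa only [inv_div] using hslope.inv₀ ha.ne'
  have hmain : Tendsto (fun r => (g r * deriv F (g r) / F (g r)) * (deriv g r * (r / g r)))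
      (nhdsWithin 0 (Ioi 0)) (nhds (d * (a * a⁻¹))) := hA.mul (hderiv.mul hinv)
  rw [mul_inv_cancel₀ ha.ne', mul_one] at hmain
  exact Tendsto.congr' (EventuallyEq.symm heq) hmain
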